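/- Fix data points x^(1), ..., x^(N) ∈ R^n, values y ∈ R^N, and a finite exponent set W ⊆ Z^n. The loss function L(p, q) = max_{1≤i≤N} |max_{w∈W}(p_w + w·x^(i)) - max_{w∈W}(q_w + w·x^(i)) - y_i|, viewed as a function of the coefficient vectors (p, q) ∈ R^W × R^W, is a difference of two convex piecewise linear functions; in particular, it can be written as g(p,q) - h(p,q) where g and h are each pointwise maxima of finitely many affine functions of (p,q). -/

import Mathlib

open Finset

section DC

variable {E : Type*} [AddCommGroup E] [Module ℝ E]

/-- Evaluation of an affine piece. -/
noncomputable def evAff (x : E) (p : (E →ₗ[ℝ] ℝ) × ℝ) : ℝ := p.1 x + p.2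

/-- `f` is a pointwise max of finitely many affine functions. -/
def MaxAffine (f : E → ℝ) : Prop :=
  ∃ (S : Finset ((E →ₗ[ℝ] ℝ) × ℝ)) (h : S.Nonempty), ∀ x, f x = S.sup' h (evAff x)

lemma maxAffine_affine (l : E →ₗ[ℝ] ℝ) (c : ℝ) : MaxAffine (fun x => l x + c) :=
  ⟨{(l, c)}, ⟨_, mem_singleton_self _⟩, fun x => by simp [evAff]⟩

lemma sup'_add_sup' {ι κ : Type*} (S : Finset ι) (T : Finset κ) (hS : S.Nonempty)
    (hT : T.Nonempty) (F : ι → ℝ) (G : κ → ℝ) :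
    S.sup' hS F + T.sup' hT G = (S ×ˢ T).sup' (hS.product hT) (fun p => F p.1 + G p.2) := by
  apply le_antisymm
  · obtain ⟨a, ha, hae⟩ := S.exists_mem_eq_sup' hS F
    obtain ⟨b, hb, hbe⟩ := T.exists_mem_eq_sup' hT G
    rw [hae, hbe]
    have hm : (a, b) ∈ S ×ˢ T := mem_product.2 ⟨ha, hb⟩
    exact le_sup' (fun p => F p.1 + G p.2) hm
  · apply sup'_le
    rintro ⟨a, b⟩ hab
    rw [mem_product] at hab
    exact add_le_add (le_sup' _ hab.1) (le_sup' _ hab.2)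

lemma MaxAffine.add {f g : E → ℝ} (hf : MaxAffine f) (hg : MaxAffine g) :
    MaxAffine (fun x => f x + g x) := by
  classical
  obtain ⟨S, hS, hfS⟩ := hf
  obtain ⟨T, hT, hgT⟩ := hg
  refine ⟨(S ×ˢ T).image (fun p => (p.1.1 + p.2.1, p.1.2 + p.2.2)),
    (hS.product hT).image _, fun x => ?_⟩
  show f x + g x = _
  rw [hfS, hgT, sup'_add_sup' S T hS hT, sup'_image]
  apply sup'_congr _ rfl
  rintro ⟨a, b⟩ _
  simp only [Function.comp, evAff, LinearMap.add_apply]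
  ring

lemma MaxAffine.max {f g : E → ℝ} (hf : MaxAffine f) (hg : MaxAffine g) :
    MaxAffine (fun x => max (f x) (g x)) := by
  classical
  obtain ⟨S, hS, hfS⟩ := hf
  obtain ⟨T, hT, hgT⟩ := hg
  refine ⟨S ∪ T, hS.mono subset_union_left, fun x => ?_⟩
  show f x ⊔ g x = _
  rw [hfS, hgT, sup'_union hS hT]

lemma maxAffine_ciSup_affine {ι : Type*} [Fintype ι] [Nonempty ι]
    (l : ι → E →ₗ[ℝ] ℝ) (c : ι → ℝ) : MaxAffine (fun x => ⨆ i, (l i x + c i)) := by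
  classical
  refine ⟨univ.image (fun i => (l i, c i)), (univ_nonempty).image _, fun x => ?_⟩
  show (⨆ i, (l i x + c i)) = _
  rw [sup'_image, ← sup'_univ_eq_ciSup]
  exact sup'_congr _ rfl (fun i _ => rfl)

/-- `f` is a difference of two max-affine functions. -/
def DC (f : E → ℝ) : Prop :=
  ∃ g h : E → ℝ, MaxAffine g ∧ MaxAffine h ∧ ∀ x, f x = g x - h x

lemma MaxAffine.dc {f : E → ℝ} (hf : MaxAffine f) : DC f :=
  ⟨f, fun _ => (0 : E →ₗ[ℝ] ℝ) _ + 0, hf, maxAffine_affine 0 0, fun x => by simp⟩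

lemma dc_const (c : ℝ) : DC (fun _ : E => c) := by
  have := maxAffine_affine (0 : E →ₗ[ℝ] ℝ) c
  simpa using this.dc

lemma DC.neg {f : E → ℝ} (hf : DC f) : DC (fun x => -f x) := by
  obtain ⟨g, h, hg, hh, he⟩ := hf
  exact ⟨h, g, hh, hg, fun x => by show -f x = _; rw [he x]; ring⟩

lemma DC.add {f g : E → ℝ} (hf : DC f) (hg : DC g) : DC (fun x => f x + g x) := by
  obtain ⟨a, b, ha, hb, he⟩ := hf
  obtain ⟨c, d, hc, hd, he'⟩ := hg
  exact ⟨_, _, ha.add hc, hb.add hd, fun x => by show f x + g x = _; rw [he x, he' x]; ring⟩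

lemma DC.sub {f g : E → ℝ} (hf : DC f) (hg : DC g) : DC (fun x => f x - g x) := by
  have := hf.add hg.neg
  simpa [sub_eq_add_neg] using this

lemma DC.max {f g : E → ℝ} (hf : DC f) (hg : DC g) : DC (fun x => max (f x) (g x)) := by
  obtain ⟨a, b, ha, hb, he⟩ := hf
  obtain ⟨c, d, hc, hd, he'⟩ := hg
  refine ⟨_, _, (ha.add hd).max (hc.add hb), hb.add hd, fun x => ?_⟩
  show f x ⊔ g x = _
  rw [he x, he' x]
  rcases max_cases ((a x + d x)) ((c x + b x)) with ⟨h1, h2⟩ | ⟨h1, h2⟩ <;>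
    rcases max_cases (a x - b x) (c x - d x) with ⟨h3, h4⟩ | ⟨h3, h4⟩ <;>
    simp only [h1, h3] <;> linarith

lemma DC.abs {f : E → ℝ} (hf : DC f) : DC (fun x => |f x|) := by
  have := hf.max hf.neg
  simpa [abs_eq_max_neg] using this

lemma dc_ciSup {ι : Type*} [Fintype ι] [Nonempty ι] {f : ι → E → ℝ}
    (hf : ∀ i, DC (f i)) : DC (fun x => ⨆ i, f i x) := by
  classical
  have key : ∀ (S : Finset ι) (hS : S.Nonempty), DC (fun x => S.sup' hS (fun i => f i x)) := by
    intro S hS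
    induction hS using Finset.Nonempty.cons_induction with
    | singleton i => simpa using hf i
    | cons i S hi hS ih =>
      have h2 := (hf i).max ih
      have heq : (fun x => max (f i x) (S.sup' hS fun j => f j x)) =
          fun x => (Finset.cons i S hi).sup' (Finset.cons_nonempty hi) (fun j => f j x) := by
        funext x
        rw [sup'_cons]
      exact heq ▸ h2
  have := key univ univ_nonempty
  have heq : ∀ x : E, (univ.sup' univ_nonempty (fun i => f i x)) = ⨆ i, f i x := fun x =>
    sup'_univ_eq_ciSup _
  simpa [funext heq] using this

lemma ciSup_comp_equiv {ι κ : Type*} (e : ι ≃ κ) (f : κ → ℝ) :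
    ⨆ i, f (e i) = ⨆ k, f k := by
  simp only [iSup]
  congr 1
  exact e.surjective.range_comp f

lemma sup'_eq_ciSup_subtype (S : Finset ((E →ₗ[ℝ] ℝ) × ℝ)) (hS : S.Nonempty) (x : E) :
    S.sup' hS (evAff x) = ⨆ a : {a // a ∈ S}, evAff x a := by
  haveI : Nonempty {a // a ∈ S} := ⟨⟨hS.choose, hS.choose_spec⟩⟩
  rw [sup'_eq_csSup_image, iSup]
  congr 1
  ext r
  simp only [Set.mem_image, Set.mem_range, Subtype.exists, mem_coe, Prod.exists]
  tauto

/-- Extract a `Fin (K+1)`-indexed representation from a max-affine function. -/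
lemma MaxAffine.exists_fin {f : E → ℝ} (hf : MaxAffine f) :
    ∃ (K : ℕ) (α : Fin (K + 1) → E →ₗ[ℝ] ℝ) (β : Fin (K + 1) → ℝ),
      ∀ x, f x = ⨆ k, (α k x + β k) := by
  obtain ⟨S, hS, hfS⟩ := hf
  have hcard : S.card = (S.card - 1) + 1 := (Nat.succ_pred_eq_of_pos (card_pos.2 hS)).symm
  set e : Fin (S.card - 1 + 1) ≃ {a // a ∈ S} :=
    (finCongr hcard.symm).trans S.equivFin.symm
  refine ⟨S.card - 1, fun k => ((e k : (E →ₗ[ℝ] ℝ) × ℝ)).1,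
    fun k => ((e k : (E →ₗ[ℝ] ℝ) × ℝ)).2, fun x => ?_⟩
  rw [hfS, sup'_eq_ciSup_subtype S hS x, ← ciSup_comp_equiv e (fun a => evAff x a)]
  rfl

end DC

theorem loss_is_tropical_rational {n N : ℕ} (x : Fin (N + 1) → Fin n → ℝ)
    (y : Fin (N + 1) → ℝ) (W : Finset (Fin n → ℤ)) (hW : W.Nonempty)
    (L : ({w // w ∈ W} → ℝ) → ({w // w ∈ W} → ℝ) → ℝ)
    (hL : ∀ p q, L p q =
      ⨆ i, |(⨆ w : {w // w ∈ W}, (p w + ∑ t, ((w : Fin n → ℤ) t : ℝ) * x i t)) -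
        (⨆ w : {w // w ∈ W}, (q w + ∑ t, ((w : Fin n → ℤ) t : ℝ) * x i t)) - y i|) :
    ∃ (K₁ K₂ : ℕ)
      (α : Fin (K₁ + 1) → (({w // w ∈ W} → ℝ) × ({w // w ∈ W} → ℝ)) →ₗ[ℝ] ℝ)
      (β : Fin (K₁ + 1) → ℝ)
      (γ : Fin (K₂ + 1) → (({w // w ∈ W} → ℝ) × ({w // w ∈ W} → ℝ)) →ₗ[ℝ] ℝ)
      (δ : Fin (K₂ + 1) → ℝ),
      ∀ p q, L p q = (⨆ k, (α k (p, q) + β k)) - ⨆ k, (γ k (p, q) + δ k) := by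
  haveI : Nonempty {w // w ∈ W} := ⟨⟨hW.choose, hW.choose_spec⟩⟩
  let P := {w // w ∈ W} → ℝ
  let c : Fin (N + 1) → {w // w ∈ W} → ℝ :=
    fun i w => ∑ t, ((w : Fin n → ℤ) t : ℝ) * x i t
  have key : DC (fun v : P × P =>
      ⨆ i, |(⨆ w : {w // w ∈ W}, (v.1 w + c i w)) -
        (⨆ w : {w // w ∈ W}, (v.2 w + c i w)) - y i|) := by
    apply dc_ciSup
    intro i
    apply DC.abs
    apply DC.sub
    · apply DC.sub
      · exact (maxAffine_ciSup_affine
          (fun w => (LinearMap.proj w).comp (LinearMap.fst ℝ P P)) (c i)).dc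
      · exact (maxAffine_ciSup_affine
          (fun w => (LinearMap.proj w).comp (LinearMap.snd ℝ P P)) (c i)).dc
    · exact dc_const (y i)
  obtain ⟨g, h, hg, hh, he⟩ := key
  obtain ⟨K₁, α, β, hα⟩ := hg.exists_fin
  obtain ⟨K₂, γ, δ, hγ⟩ := hh.exists_fin
  refine ⟨K₁, K₂, α, β, γ, δ, fun p q => ?_⟩
  calc L p q = ⨆ i, |(⨆ w : {w // w ∈ W}, (p w + c i w)) -
        (⨆ w : {w // w ∈ W}, (q w + c i w)) - y i| := hL p q
    _ = g (p, q) - h (p, q) := he (p, q)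
    _ = _ := by rw [hα, hγ]
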